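/- Let X be a nonzero real Hilbert space and let G : X → X be a continuous and invertible linear operator. If there exists a positive definite, invertible continuous linear operator A : X → X satisfying the operator equation A = G ∘ A⁻¹ ∘ G*, then the ellipsoid C := {x ∈ X : ⟨Ax, x⟩ ≤ 1} satisfies C = (GC)°. -/

import Mathlib

open scoped RealInnerProductSpace

/-- The polar of a subset `C` of a real inner product space. -/
def polarSet {X : Type*} [NormedAddCommGroup X] [InnerProductSpace ℝ X]
    (C : Set X) : Set X :=
  {y : X | ∀ c ∈ C, ⟪y, c⟫ ≤ 1}

/-- If `A` is a positive definite invertible continuous linear operator satisfying the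
operator equation `A = G ∘ A⁻¹ ∘ G*`, then the ellipsoid `C = {x | ⟪Ax, x⟫ ≤ 1}`
solves `C = (GC)°`. -/
theorem stmt14 {X : Type*} [NormedAddCommGroup X] [InnerProductSpace ℝ X]
    [CompleteSpace X] [Nontrivial X] (G A : X ≃L[ℝ] X)
    (hsa : IsSelfAdjoint (A : X →L[ℝ] X))
    (hpd : ∀ x : X, x ≠ 0 → 0 < ⟪A x, x⟫)
    (heq : (A : X →L[ℝ] X) =
      (G : X →L[ℝ] X) ∘L (A.symm : X →L[ℝ] X) ∘L
        ContinuousLinearMap.adjoint (G : X →L[ℝ] X)) :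
    {x : X | ⟪A x, x⟫ ≤ 1} =
      polarSet ((G : X → X) '' {x : X | ⟪A x, x⟫ ≤ 1}) := by
  have hGstar : ∀ y : X, A (G.symm (A y)) = ContinuousLinearMap.adjoint (G : X →L[ℝ] X) y := by
    intro y
    have h1 : A y = G (A.symm (ContinuousLinearMap.adjoint (G : X →L[ℝ] X) y)) := by
      have := ContinuousLinearMap.ext_iff.mp heq y
      simpa using this
    have h2 : G.symm (A y) = A.symm (ContinuousLinearMap.adjoint (G : X →L[ℝ] X) y) := by
      rw [h1]; exact G.symm_apply_apply _
    rw [h2]; exact A.apply_symm_apply _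
  -- key computation: ⟪A (G⁻¹ A y), G⁻¹ A y⟫ = ⟪A y, y⟫
  have hkey : ∀ y : X, ⟪A (G.symm (A y)), G.symm (A y)⟫ = ⟪A y, y⟫ := by
    intro y
    rw [hGstar y, ContinuousLinearMap.adjoint_inner_left]
    simp only [ContinuousLinearEquiv.coe_coe, ContinuousLinearEquiv.apply_symm_apply]
    exact real_inner_comm _ _
  have hsym : ∀ u v : X, ⟪A u, v⟫ = ⟪A v, u⟫ := by
    intro u v
    have h := hsa.isSymmetric u v
    exact h.trans (real_inner_comm (A v) u)
  have hnn : ∀ x : X, 0 ≤ ⟪A x, x⟫ := by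
    intro x
    rcases eq_or_ne x 0 with rfl | hx
    · simp
    · exact (hpd x hx).le
  ext y
  simp only [Set.mem_setOf_eq, polarSet, Set.mem_image]
  constructor
  · rintro hy z ⟨c, hc, rfl⟩
    -- ⟪y, G c⟫ = ⟪A (G⁻¹ A y), c⟫ ≤ 1 by AM-GM style
    have h1 : ⟪y, G c⟫ = ⟪A (G.symm (A y)), c⟫ := by
      rw [hGstar y, ContinuousLinearMap.adjoint_inner_left]
      rfl
    set u := G.symm (A y) with hu
    have hAu : ⟪A u, u⟫ ≤ 1 := by rw [hkey y]; exact hy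
    have hdiff : 0 ≤ ⟪A (u - c), u - c⟫ := hnn _
    have hexp : ⟪A (u - c), u - c⟫ = ⟪A u, u⟫ - 2 * ⟪A u, c⟫ + ⟪A c, c⟫ := by
      have : A (u - c) = A u - A c := map_sub _ _ _
      rw [this, inner_sub_left, inner_sub_right, inner_sub_right, hsym c u]
      ring
    have : 2 * ⟪A u, c⟫ ≤ ⟪A u, u⟫ + ⟪A c, c⟫ := by linarith [hdiff, hexp.symm ▸ hdiff]
    rw [h1]
    nlinarith [hc]
  · intro hy
    rcases eq_or_ne y 0 with rfl | hy0
    · simp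
    · set t := ⟪A y, y⟫ with ht
      have htpos : 0 < t := hpd y hy0
      set s := Real.sqrt t with hs
      have hspos : 0 < s := Real.sqrt_pos.mpr htpos
      set c := s⁻¹ • G.symm (A y) with hcdef
      have hAc : ⟪A c, c⟫ = 1 := by
        have : A c = s⁻¹ • A (G.symm (A y)) := by
          rw [hcdef]; exact map_smul _ _ _
        rw [hcdef] at this ⊢
        rw [this, inner_smul_left, inner_smul_right, hkey y, ← ht]
        simp only [RCLike.ofReal_real_eq_id, id_eq, starRingEnd_apply, star_inv₀]
        have : (s⁻¹ : ℝ) * (s⁻¹ * t) = 1 := by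
          field_simp
          rw [hs, Real.sq_sqrt htpos.le]
        simpa using this
      have hc1 : ⟪y, G c⟫ ≤ 1 := hy (G c) ⟨c, le_of_eq hAc, rfl⟩
      have hGc : (G : X → X) c = s⁻¹ • A y := by
        rw [hcdef, map_smul]
        simp
      have hyA : (inner ℝ y (A y) : ℝ) = t := real_inner_comm (A y) y
      rw [hGc, real_inner_smul_right, hyA] at hc1
      -- s⁻¹ * t = s ≤ 1
      have hst : s⁻¹ * t = s := by
        field_simp
        rw [hs, Real.sq_sqrt htpos.le]
      rw [hst] at hc1
      calc t = s * s := by rw [hs, Real.mul_self_sqrt htpos.le]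
        _ ≤ 1 * 1 := by nlinarith
        _ = 1 := one_mul 1
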